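/- arXiv:2006.11283 — 2 statements merged into one kernel-verified Lean document; each statement's English description precedes it below -/
import Mathlib

section
/- Let z_1,...,z_n ∈ [0,1] and let w_1,...,w_n ≥ 0. The function Z ↦ Σ_{k=1}^n w_k·(1 - ∏_{k'=1}^k (1 - z_{k'})) is monotone nondecreasing in each coordinate z_j, and the set function S ↦ Σ_{k=1}^n w_k·𝟙(S ∩ {1,...,k} ≠ ∅) (obtained for binary z with support S) is monotone and submodular on subsets of {1,...,n}. -/
/-- The set-function form of the caching gain:
`G(S) = Σₖ wₖ·𝟙(S ∩ {1,...,k} ≠ ∅)`. -/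
def cachingGainSet {n : ℕ} (w : Fin n → ℝ) (S : Finset (Fin n)) : ℝ :=
  ∑ k, w k * (if (S ∩ Finset.Iic k).Nonempty then (1 : ℝ) else 0)

lemma insert_inter_nonempty {n : ℕ} (S : Finset (Fin n)) (j k : Fin n) :
    ((insert j S ∩ Finset.Iic k).Nonempty) ↔ (j ≤ k ∨ (S ∩ Finset.Iic k).Nonempty) := by
  constructor
  · rintro ⟨x, hx⟩
    simp only [Finset.mem_inter, Finset.mem_insert, Finset.mem_Iic] at hx
    rcases hx.1 with h | h
    · left; exact h ▸ hx.2
    · right; exact ⟨x, Finset.mem_inter.2 ⟨h, Finset.mem_Iic.2 hx.2⟩⟩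
  · rintro (h | ⟨x, hx⟩)
    · exact ⟨j, Finset.mem_inter.2 ⟨Finset.mem_insert_self _ _, Finset.mem_Iic.2 h⟩⟩
    · simp only [Finset.mem_inter] at hx
      exact ⟨x, Finset.mem_inter.2 ⟨Finset.mem_insert_of_mem hx.1, hx.2⟩⟩

/-- The caching gain `F(z) = Σₖ wₖ·(1 - ∏_{k'≤k}(1 - z_{k'}))` is monotone
nondecreasing in each coordinate on `[0,1]ⁿ`, and its set-function form is monotone
and submodular. -/
theorem caching_gain_monotone_submodular (n : ℕ) (w : Fin n → ℝ) (hw : ∀ k, 0 ≤ w k) :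
    (∀ z z' : Fin n → ℝ, (∀ i, z i ∈ Set.Icc (0 : ℝ) 1) →
      (∀ i, z' i ∈ Set.Icc (0 : ℝ) 1) → z ≤ z' →
      ∑ k, w k * (1 - ∏ k' ∈ Finset.Iic k, (1 - z k'))
        ≤ ∑ k, w k * (1 - ∏ k' ∈ Finset.Iic k, (1 - z' k'))) ∧
    (∀ S T : Finset (Fin n), S ⊆ T → cachingGainSet w S ≤ cachingGainSet w T) ∧
    (∀ S T : Finset (Fin n), S ⊆ T → ∀ j ∉ T,
      cachingGainSet w (insert j T) - cachingGainSet w T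
        ≤ cachingGainSet w (insert j S) - cachingGainSet w S) := by
  refine ⟨?_, ?_, ?_⟩
  · intro z z' hz hz' hle
    apply Finset.sum_le_sum
    intro k _
    apply mul_le_mul_of_nonneg_left _ (hw k)
    apply sub_le_sub_left
    apply Finset.prod_le_prod
    · intro i _; linarith [(hz' i).2]
    · intro i _; linarith [hle i]
  · intro S T hST
    apply Finset.sum_le_sum
    intro k _
    apply mul_le_mul_of_nonneg_left _ (hw k)
    by_cases h : (S ∩ Finset.Iic k).Nonempty
    · rw [if_pos h, if_pos]
      exact h.mono (Finset.inter_subset_inter_right hST)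
    · rw [if_neg h]; split <;> norm_num
  · intro S T hST j hj
    unfold cachingGainSet
    rw [← Finset.sum_sub_distrib, ← Finset.sum_sub_distrib]
    apply Finset.sum_le_sum
    intro k _
    rw [← mul_sub, ← mul_sub]
    apply mul_le_mul_of_nonneg_left _ (hw k)
    by_cases hjk : j ≤ k
    · by_cases hS : (S ∩ Finset.Iic k).Nonempty
      · have hT : (T ∩ Finset.Iic k).Nonempty :=
          hS.mono (Finset.inter_subset_inter_right hST)
        rw [if_pos hS, if_pos hT, if_pos, if_pos] <;>
          simp [insert_inter_nonempty, hjk]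
      · rw [if_neg hS, if_pos ((insert_inter_nonempty S j k).2 (Or.inl hjk)),
          if_pos ((insert_inter_nonempty T j k).2 (Or.inl hjk))]
        split <;> norm_num
    · rw [if_congr (insert_inter_nonempty S j k) rfl rfl,
        if_congr (insert_inter_nonempty T j k) rfl rfl]
      simp only [hjk, false_or]
      by_cases hS : (S ∩ Finset.Iic k).Nonempty
      · have hT : (T ∩ Finset.Iic k).Nonempty :=
          hS.mono (Finset.inter_subset_inter_right hST)
        simp [hS, hT]
      · simp [hS]
end

section
/- Let Z_1,...,Z_k be negatively associated {0,1}-valued random variables and define F(Z) = Σ_{j=1}^k w_j·(1 - ∏_{j'=1}^j (1 - Z_{j'})) with w_j ≥ 0. Then E[F(Z)] ≥ Σ_{j=1}^k w_j·(1 - ∏_{j'=1}^j (1 - E[Z_{j'}])), i.e., the expected caching gain under negatively associated placement is at least the gain of the deterministic relaxation evaluated at the marginal probabilities. -/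
open MeasureTheory

/-- Negative association (Joag-Dev and Proschan). -/
def NegAssoc {Ω : Type*} [MeasurableSpace Ω] (μ : Measure Ω) {n : ℕ}
    (Z : Fin n → Ω → ℝ) : Prop :=
  ∀ I J : Finset (Fin n), Disjoint I J →
    ∀ f g : (Fin n → ℝ) → ℝ, Monotone f → Monotone g →
      (∀ x y : Fin n → ℝ, (∀ i ∈ I, x i = y i) → f x = f y) →
      (∀ x y : Fin n → ℝ, (∀ j ∈ J, x j = y j) → g x = g y) →
      (∃ C, ∀ x, |f x| ≤ C) → (∃ C, ∀ x, |g x| ≤ C) →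
      ∫ ω, f (fun i => Z i ω) * g (fun i => Z i ω) ∂μ
        ≤ (∫ ω, f (fun i => Z i ω) ∂μ) * ∫ ω, g (fun i => Z i ω) ∂μ

/-- For negatively associated `{0,1}`-valued placement variables, the expected caching
gain `E[F(Z)] = E[Σⱼ wⱼ·(1 - ∏_{j'≤j}(1 - Z_{j'}))]` is at least the gain of the
deterministic relaxation evaluated at the marginal probabilities. -/
theorem expected_caching_gain_ge_relaxation {Ω : Type*} [MeasurableSpace Ω]
    (μ : Measure Ω) [IsProbabilityMeasure μ] {k : ℕ} (Z : Fin k → Ω → ℝ)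
    (w : Fin k → ℝ) (hw : ∀ j, 0 ≤ w j)
    (hmeas : ∀ j, Measurable (Z j))
    (hbool : ∀ j ω, Z j ω = 0 ∨ Z j ω = 1)
    (hNA : NegAssoc μ Z) :
    ∑ j, w j * (1 - ∏ j' ∈ Finset.Iic j, (1 - ∫ ω, Z j' ω ∂μ))
      ≤ ∫ ω, ∑ j, w j * (1 - ∏ j' ∈ Finset.Iic j, (1 - Z j' ω)) ∂μ := by
  classical
  -- clamp function
  set c : ℝ → ℝ := fun t => min 1 (max 0 t) with hc
  have hcmono : Monotone c := fun x y h =>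
    min_le_min le_rfl (max_le_max le_rfl h)
  have hc0 : ∀ t, 0 ≤ c t := fun t => le_min zero_le_one (le_max_left 0 t)
  have hc1 : ∀ t, c t ≤ 1 := fun t => min_le_left _ _
  have hcZ : ∀ j ω, c (Z j ω) = Z j ω := by
    intro j ω; rcases hbool j ω with h | h <;> simp [hc, h]
  have hfac0 : ∀ j ω, 0 ≤ 1 - Z j ω := by
    intro j ω; rcases hbool j ω with h | h <;> simp [h]
  have hfac1 : ∀ j ω, 1 - Z j ω ≤ 1 := by
    intro j ω; rcases hbool j ω with h | h <;> simp [h]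
  -- integrability of bounded measurable functions
  have hintb : ∀ f : Ω → ℝ, Measurable f → (∀ ω, |f ω| ≤ 1) → Integrable f μ := by
    intro f hf hb
    exact (integrable_const (1 : ℝ)).mono' hf.aestronglyMeasurable (ae_of_all _ hb)
  have hZint : ∀ j, Integrable (Z j) μ := by
    intro j
    refine hintb _ (hmeas j) ?_
    intro ω; rcases hbool j ω with h | h <;> simp [h]
  have hprodmeas : ∀ S : Finset (Fin k), Measurable (fun ω => ∏ j' ∈ S, (1 - Z j' ω)) :=
    fun S => Finset.measurable_prod _ (fun i _ => measurable_const.sub (hmeas i))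
  have hprod0 : ∀ (S : Finset (Fin k)) ω, 0 ≤ ∏ j' ∈ S, (1 - Z j' ω) := by
    intro S ω; exact Finset.prod_nonneg (fun i _ => hfac0 i ω)
  have hprod1 : ∀ (S : Finset (Fin k)) ω, ∏ j' ∈ S, (1 - Z j' ω) ≤ 1 := by
    intro S ω; exact Finset.prod_le_one (fun i _ => hfac0 i ω) (fun i _ => hfac1 i ω)
  have hprodint : ∀ S : Finset (Fin k), Integrable (fun ω => ∏ j' ∈ S, (1 - Z j' ω)) μ := by
    intro S
    refine hintb _ (hprodmeas S) ?_
    intro ω; rw [abs_le]; exact ⟨by linarith [hprod0 S ω], hprod1 S ω⟩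
  have hZle1 : ∀ j, ∫ ω, Z j ω ∂μ ≤ 1 := by
    intro j
    calc ∫ ω, Z j ω ∂μ ≤ ∫ _, (1 : ℝ) ∂μ := by
          refine integral_mono (hZint j) (integrable_const 1) ?_
          intro ω; rcases hbool j ω with h | h <;> simp [h]
      _ = 1 := by simp
  -- key lemma
  have key : ∀ S : Finset (Fin k),
      ∫ ω, ∏ j' ∈ S, (1 - Z j' ω) ∂μ ≤ ∏ j' ∈ S, (1 - ∫ ω, Z j' ω ∂μ) := by
    intro S
    induction S using Finset.induction_on with
    | empty => simp
    | @insert a S ha ih =>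
      have hdisj : Disjoint S {a} := by
        simp [Finset.disjoint_singleton_right, ha]
      set f : (Fin k → ℝ) → ℝ := fun x => -(∏ j' ∈ S, (1 - c (x j'))) with hf
      set g : (Fin k → ℝ) → ℝ := fun x => -(1 - c (x a)) with hg
      have hfmono : Monotone f := by
        intro x y h
        simp only [hf, neg_le_neg_iff]
        exact Finset.prod_le_prod (fun i _ => by linarith [hc1 (y i)])
          (fun i _ => by linarith [show c (x i) ≤ c (y i) from hcmono (h i)])
      have hgmono : Monotone g := by
        intro x y h
        simp only [hg, neg_le_neg_iff]
        linarith [show c (x a) ≤ c (y a) from hcmono (h a)]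
      have hfdep : ∀ x y : Fin k → ℝ, (∀ i ∈ S, x i = y i) → f x = f y := by
        intro x y h
        simp only [hf]
        congr 1
        exact Finset.prod_congr rfl (fun i hi => by rw [h i hi])
      have hgdep : ∀ x y : Fin k → ℝ, (∀ j ∈ ({a} : Finset (Fin k)), x j = y j) → g x = g y := by
        intro x y h
        simp only [hg, h a (Finset.mem_singleton_self a)]
      have hfbd : ∃ C, ∀ x, |f x| ≤ C := by
        refine ⟨1, fun x => ?_⟩
        have h0 : (0:ℝ) ≤ ∏ j' ∈ S, (1 - c (x j')) :=
          Finset.prod_nonneg (fun i _ => by linarith [hc1 (x i)])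
        have h1 : ∏ j' ∈ S, (1 - c (x j')) ≤ 1 :=
          Finset.prod_le_one (fun i _ => by linarith [hc1 (x i)])
            (fun i _ => by linarith [hc0 (x i)])
        rw [hf, abs_neg, abs_of_nonneg h0]
        exact h1
      have hgbd : ∃ C, ∀ x, |g x| ≤ C := by
        refine ⟨1, fun x => ?_⟩
        rw [hg, abs_neg, abs_le]
        constructor <;> [linarith [hc1 (x a)]; linarith [hc0 (x a)]]
      have hna := hNA S {a} hdisj f g hfmono hgmono hfdep hgdep hfbd hgbd
      have hfz : ∀ ω, f (fun i => Z i ω) = -(∏ j' ∈ S, (1 - Z j' ω)) := by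
        intro ω; simp only [hf]
        congr 1
        exact Finset.prod_congr rfl (fun i _ => by rw [hcZ])
      have hgz : ∀ ω, g (fun i => Z i ω) = -(1 - Z a ω) := by
        intro ω; simp only [hg, hcZ]
      simp only [hfz, hgz, neg_mul_neg] at hna
      rw [integral_neg, integral_neg, neg_mul_neg] at hna
      have hint1a : ∫ ω, (1 - Z a ω) ∂μ = 1 - ∫ ω, Z a ω ∂μ := by
        rw [integral_sub (integrable_const 1) (hZint a)]
        simp
      have step1 : ∫ ω, ∏ j' ∈ insert a S, (1 - Z j' ω) ∂μ
          ≤ (∫ ω, ∏ j' ∈ S, (1 - Z j' ω) ∂μ) * (1 - ∫ ω, Z a ω ∂μ) := by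
        rw [← hint1a]
        calc ∫ ω, ∏ j' ∈ insert a S, (1 - Z j' ω) ∂μ
            = ∫ ω, (∏ j' ∈ S, (1 - Z j' ω)) * (1 - Z a ω) ∂μ := by
              refine integral_congr_ae (ae_of_all _ fun ω => ?_)
              simp only [Finset.prod_insert ha, mul_comm]
          _ ≤ _ := hna
      have h1a : 0 ≤ 1 - ∫ ω, Z a ω ∂μ := by linarith [hZle1 a]
      calc ∫ ω, ∏ j' ∈ insert a S, (1 - Z j' ω) ∂μ
          ≤ (∫ ω, ∏ j' ∈ S, (1 - Z j' ω) ∂μ) * (1 - ∫ ω, Z a ω ∂μ) := step1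
        _ ≤ (∏ j' ∈ S, (1 - ∫ ω, Z j' ω ∂μ)) * (1 - ∫ ω, Z a ω ∂μ) :=
            mul_le_mul_of_nonneg_right ih h1a
        _ = ∏ j' ∈ insert a S, (1 - ∫ ω, Z j' ω ∂μ) := by
            rw [Finset.prod_insert ha, mul_comm]
  -- assemble
  have hterm_int : ∀ j : Fin k,
      Integrable (fun ω => w j * (1 - ∏ j' ∈ Finset.Iic j, (1 - Z j' ω))) μ := by
    intro j
    exact (((integrable_const 1).sub (hprodint (Finset.Iic j))).const_mul (w j))
  rw [integral_finset_sum _ (fun j _ => hterm_int j)]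
  refine Finset.sum_le_sum fun j _ => ?_
  have : ∫ ω, w j * (1 - ∏ j' ∈ Finset.Iic j, (1 - Z j' ω)) ∂μ
      = w j * (1 - ∫ ω, ∏ j' ∈ Finset.Iic j, (1 - Z j' ω) ∂μ) := by
    rw [integral_const_mul, integral_sub (integrable_const 1) (hprodint _)]
    simp
  rw [this]
  exact mul_le_mul_of_nonneg_left (by linarith [key (Finset.Iic j)]) (hw j)
end
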